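/- Let R be a commutative ring and M a nonzero R-module. Then there exists a prime ideal p of R such that R/p belongs to the smallest class containing M that is closed under submodules and direct limits (i.e., the set of vaguely associated primes of M is nonempty). -/
import Mathlib


universe u

/-- `MemSubLim R M N` says that the module `N` belongs to `SubLim({M})`, the
smallest isomorphism-closed class of `R`-modules containing `M` and closed
under submodules and direct limits of directed systems. -/
def MemSubLim (R : Type u) [CommRing R]
    (M : Type u) [AddCommGroup M] [Module R M]
    (N : Type u) [AddCommGroup N] [Module R N] : Prop :=
  ∀ P : (X : Type u) → [AddCommGroup X] → [Module R X] → Prop,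
    P M →
    (∀ (X : Type u) [AddCommGroup X] [Module R X]
       (Y : Type u) [AddCommGroup Y] [Module R Y],
        (X ≃ₗ[R] Y) → P X → P Y) →
    (∀ (X : Type u) [AddCommGroup X] [Module R X] (L : Submodule R X),
        P X → P L) →
    (∀ (ι : Type u) [Preorder ι] [IsDirected ι (· ≤ ·)] [Nonempty ι]
        [DecidableEq ι]
        (G : ι → Type u) [∀ i, AddCommGroup (G i)] [∀ i, Module R (G i)]
        (f : ∀ i j, i ≤ j → G i →ₗ[R] G j) [DirectedSystem G (f · · ·)],
        (∀ i, P (G i)) → P (Module.DirectLimit G f)) →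
    P N

theorem memSubLim_self (R : Type u) [CommRing R]
    (M : Type u) [AddCommGroup M] [Module R M] : MemSubLim R M M :=
  fun _ hP _ _ _ => hP

/-- If `N ∈ SubLim({M})` then for every `y : N`, the cyclic module
`R ⧸ ann(y)` is in `SubLim({M})`. -/
theorem memSubLim_quot_torsionOf (R : Type u) [CommRing R]
    (M : Type u) [AddCommGroup M] [Module R M]
    (N : Type u) [AddCommGroup N] [Module R N]
    (hN : MemSubLim R M N) (y : N) :
    MemSubLim R M (R ⧸ Ideal.torsionOf R N y) := by
  intro P hP hiso hsub hlim
  have hPN : P N := hN P hP hiso hsub hlim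
  have hspan : P (R ∙ y) := hsub N (R ∙ y) hPN
  exact hiso _ _ (Ideal.quotTorsionOfEquivSpanSingleton R N y).symm hspan

/-- `SubLim({M})` is closed under quotients by the supremum of a nonempty
chain of ideals, provided each quotient by an element of the chain is in the
class: the quotient by the sup is the direct limit of the quotients. -/
theorem memSubLim_quot_sSup_chain (R : Type u) [CommRing R]
    (M : Type u) [AddCommGroup M] [Module R M]
    (c : Set (Ideal R)) (hc : IsChain (· ≤ ·) c) (hne : c.Nonempty)
    (h : ∀ I ∈ c, MemSubLim R M (R ⧸ I)) :
    MemSubLim R M (R ⧸ sSup c) := by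
  classical
  intro P hP hiso hsub hlim
  set J : Ideal R := sSup c with hJ
  -- the index type
  let ι : Type u := {I : Ideal R // I ∈ c}
  haveI : Nonempty ι := ⟨⟨hne.choose, hne.choose_spec⟩⟩
  haveI : IsDirected ι (· ≤ ·) := by
    constructor
    intro i j
    rcases eq_or_ne i.1 j.1 with hij | hij
    · exact ⟨j, Subtype.coe_le_coe.1 (le_of_eq hij), le_refl _⟩
    · rcases hc i.2 j.2 hij with h' | h'
      · exact ⟨j, h', le_refl _⟩
      · exact ⟨i, le_refl _, h'⟩
  haveI : DecidableEq ι := Classical.decEq ι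
  let G : ι → Type u := fun i => R ⧸ i.1
  let f : ∀ i j : ι, i ≤ j → G i →ₗ[R] G j := fun i j hij =>
    Submodule.mapQ i.1 j.1 LinearMap.id hij
  haveI : DirectedSystem G (f · · ·) := by
    constructor
    · intro i x
      obtain ⟨r, rfl⟩ := Submodule.Quotient.mk_surjective _ x
      rfl
    · intro i j k hij hjk x
      obtain ⟨r, rfl⟩ := Submodule.Quotient.mk_surjective _ x
      rfl
  have hPG : ∀ i : ι, P (G i) := fun i => h i.1 i.2 P hP hiso hsub hlim
  have hPL : P (Module.DirectLimit G f) := hlim ι G f hPG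
  -- the map from the direct limit to `R ⧸ J`
  have hle : ∀ i : ι, i.1 ≤ J := fun i => le_sSup i.2
  let g : ∀ i : ι, G i →ₗ[R] R ⧸ J := fun i =>
    Submodule.mapQ i.1 J LinearMap.id (hle i)
  have Hg : ∀ (i j : ι) (hij : i ≤ j) (x : G i), g j (f i j hij x) = g i x := by
    intro i j hij x
    obtain ⟨r, rfl⟩ := Submodule.Quotient.mk_surjective _ x
    rfl
  let F : Module.DirectLimit G f →ₗ[R] R ⧸ J := Module.DirectLimit.lift R ι G f g Hg
  have hmemJ : ∀ r : R, r ∈ J ↔ ∃ I ∈ c, r ∈ I := fun r =>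
    Submodule.mem_sSup_of_directed hne hc.directedOn
  have hFsurj : Function.Surjective F := by
    intro z
    obtain ⟨r, rfl⟩ := Submodule.Quotient.mk_surjective _ z
    obtain ⟨i0⟩ := (inferInstance : Nonempty ι)
    refine ⟨Module.DirectLimit.of R ι G f i0 (Submodule.Quotient.mk r), ?_⟩
    rw [Module.DirectLimit.lift_of]
    rfl
  have hFinj : Function.Injective F := by
    rw [injective_iff_map_eq_zero]
    intro z hz
    induction z using Module.DirectLimit.induction_on with
    | ih i x =>
      obtain ⟨r, rfl⟩ := Submodule.Quotient.mk_surjective _ x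
      rw [Module.DirectLimit.lift_of] at hz
      have hr : r ∈ J := by
        have : g i (Submodule.Quotient.mk r) = Submodule.Quotient.mk r := rfl
        rw [this, Submodule.Quotient.mk_eq_zero] at hz
        exact hz
      obtain ⟨I, hI, hrI⟩ := (hmemJ r).1 hr
      rcases eq_or_ne i.1 I with hiI | hiI
      · have : (Submodule.Quotient.mk r : G i) = 0 := by
          rw [Submodule.Quotient.mk_eq_zero]; exact hiI ▸ hrI
        rw [this, map_zero]
      · rcases hc i.2 hI hiI with h' | h'
        · have hzero : f i ⟨I, hI⟩ h' (Submodule.Quotient.mk r) = 0 := by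
            have : f i ⟨I, hI⟩ h' (Submodule.Quotient.mk r) =
                (Submodule.Quotient.mk r : R ⧸ I) := rfl
            rw [this, Submodule.Quotient.mk_eq_zero]
            exact hrI
          calc Module.DirectLimit.of R ι G f i (Submodule.Quotient.mk r)
              = Module.DirectLimit.of R ι G f ⟨I, hI⟩
                  (f i ⟨I, hI⟩ h' (Submodule.Quotient.mk r)) := by
                rw [Module.DirectLimit.of_f]
            _ = 0 := by rw [hzero, map_zero]
        · have : (Submodule.Quotient.mk r : G i) = 0 := by
            rw [Submodule.Quotient.mk_eq_zero]; exact h' hrI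
          rw [this, map_zero]
  exact hiso _ _ (LinearEquiv.ofBijective F ⟨hFinj, hFsurj⟩) hPL

/-- Over a commutative ring, every nonzero module has a vaguely
associated prime: there is a prime `p` with `R/p ∈ SubLim({M})`. -/
theorem exists_vaguely_associated_prime (R : Type u) [CommRing R]
    (M : Type u) [AddCommGroup M] [Module R M] (hM : Nontrivial M) :
    ∃ p : Ideal R, p.IsPrime ∧ MemSubLim R M (R ⧸ p) := by
  classical
  obtain ⟨x, hx⟩ := exists_ne (0 : M)
  set S : Set (Ideal R) := {I | I ≠ ⊤ ∧ MemSubLim R M (R ⧸ I)} with hS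
  have hx0 : Ideal.torsionOf R M x ∈ S := by
    constructor
    · intro htop
      have : (1 : R) ∈ Ideal.torsionOf R M x := htop ▸ Submodule.mem_top
      rw [Ideal.mem_torsionOf_iff, one_smul] at this
      exact hx this
    · exact memSubLim_quot_torsionOf R M M (memSubLim_self R M) x
  obtain ⟨m, _, hmS, hmax⟩ := zorn_le_nonempty₀ S
    (fun c hcS hc I hI => by
      refine ⟨sSup c, ⟨?_, ?_⟩, fun z hz => le_sSup hz⟩
      · intro htop
        have h1 : (1 : R) ∈ sSup c := htop ▸ Submodule.mem_top
        obtain ⟨J, hJ, h1J⟩ :=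
          (Submodule.mem_sSup_of_directed ⟨I, hI⟩ hc.directedOn).1 h1
        exact (hcS hJ).1 ((Ideal.eq_top_iff_one J).2 h1J)
      · exact memSubLim_quot_sSup_chain R M c hc ⟨I, hI⟩
          (fun J hJ => (hcS hJ).2))
    (Ideal.torsionOf R M x) hx0
  refine ⟨m, ?_, hmS.2⟩
  constructor
  · exact hmS.1
  · intro a b hab
    by_cases ha : a ∈ m
    · exact Or.inl ha
    · right
      set m' : Ideal R := Ideal.torsionOf R (R ⧸ m)
        (Submodule.Quotient.mk a) with hm'
      have hmm' : m ≤ m' := by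
        intro r hr
        rw [hm', Ideal.mem_torsionOf_iff, ← Submodule.Quotient.mk_smul,
          Submodule.Quotient.mk_eq_zero]
        rw [smul_eq_mul]
        exact Ideal.mul_mem_right a m hr
      have hm'top : m' ≠ ⊤ := by
        intro htop
        have : (1 : R) ∈ m' := htop ▸ Submodule.mem_top
        rw [hm', Ideal.mem_torsionOf_iff, one_smul,
          Submodule.Quotient.mk_eq_zero] at this
        exact ha this
      have hm'S : m' ∈ S := ⟨hm'top, memSubLim_quot_torsionOf R M (R ⧸ m) hmS.2 _⟩
      have : m' = m := le_antisymm (hmax hm'S hmm') hmm'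
      have hb : b ∈ m' := by
        rw [hm', Ideal.mem_torsionOf_iff, ← Submodule.Quotient.mk_smul,
          Submodule.Quotient.mk_eq_zero, smul_eq_mul, mul_comm]
        exact hab
      rwa [this] at hb
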